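/- Define D_{n,k} = sup{ ‖x‖_n / ‖x‖_k : x ∈ c00, ‖x‖_{ℓ1} = 1 } ∈ [0,∞] for n, k ∈ ℕ. Then: (1) D_{n,k} ≤ 1 whenever n ≤ k; (2) D_{n,k} ≥ k whenever n > k. -/

import Mathlib

/-- The ℓ¹-norm on `c00 = ℕ →₀ ℝ`. -/
noncomputable def l1 (x : ℕ →₀ ℝ) : ℝ := ∑ n ∈ x.support, |x n|

/-- `restr E x = Ex`, the restriction of `x` to the finite set `E`. -/
noncomputable def restr (E : Finset ℕ) (x : ℕ →₀ ℝ) : ℕ →₀ ℝ :=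
  x.filter (fun n => n ∈ E)

/-- `Admissible n Es` says that `E_1, …, E_n` are finite nonempty subsets of ℕ
with `n ≤ E_1 < E_2 < ⋯ < E_n`. -/
def Admissible (n : ℕ) (Es : Fin n → Finset ℕ) : Prop :=
  0 < n ∧ (∀ i, (Es i).Nonempty) ∧
    (∀ i : Fin n, ∀ a ∈ Es i, n ≤ a) ∧
    (∀ i j : Fin n, i < j → ∀ a ∈ Es i, ∀ b ∈ Es j, a < b)

/-- The Tsirelson iterate norms `‖·‖_k`. -/
noncomputable def tsir : ℕ → (ℕ →₀ ℝ) → ℝ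
  | 0, x => ⨆ n, |x n|
  | (k + 1), x => max (tsir k x)
      (sSup { r : ℝ | ∃ n : ℕ, ∃ Es : Fin n → Finset ℕ, Admissible n Es ∧
        r = (1 / 2) * ∑ i, tsir k (restr (Es i) x) })

open scoped ENNReal

/-- `D_{n,k} = sup { ‖x‖_n / ‖x‖_k : x ∈ c00, ‖x‖_{ℓ1} = 1 }`, valued in `[0,∞]`. -/
noncomputable def Dnk (n k : ℕ) : ℝ≥0∞ :=
  ⨆ x : { x : ℕ →₀ ℝ // l1 x = 1 }, ENNReal.ofReal (tsir n x / tsir k x)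


lemma l1_nonneg (x : ℕ →₀ ℝ) : 0 ≤ l1 x :=
  Finset.sum_nonneg fun _ _ => abs_nonneg _

lemma abs_le_l1 (x : ℕ →₀ ℝ) (s : ℕ) : |x s| ≤ l1 x := by
  by_cases h : s ∈ x.support
  · exact Finset.single_le_sum (fun i _ => abs_nonneg (x i)) h
  · simp [Finsupp.notMem_support_iff.mp h, l1_nonneg]

lemma bdd_abs (x : ℕ →₀ ℝ) : BddAbove (Set.range fun s => |x s|) :=
  ⟨l1 x, by rintro r ⟨s, rfl⟩; exact abs_le_l1 x s⟩

lemma abs_le_tsir0 (x : ℕ →₀ ℝ) (s : ℕ) : |x s| ≤ tsir 0 x :=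
  le_ciSup (bdd_abs x) s

lemma restr_apply (E : Finset ℕ) (x : ℕ →₀ ℝ) (s : ℕ) :
    restr E x s = if s ∈ E then x s else 0 := by
  simp [restr, Finsupp.filter_apply]

lemma restr_restr (E F : Finset ℕ) (x : ℕ →₀ ℝ) :
    restr E (restr F x) = restr (E ∩ F) x := by
  ext s
  simp only [restr_apply, Finset.mem_inter]
  by_cases h1 : s ∈ E <;> by_cases h2 : s ∈ F <;> simp [h1, h2]

lemma restr_support (x : ℕ →₀ ℝ) : restr x.support x = x := by
  ext s
  rw [restr_apply]
  by_cases h : s ∈ x.support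
  · simp [h]
  · simp [h, Finsupp.notMem_support_iff.mp h]

lemma restr_smul (E : Finset ℕ) (c : ℝ) (x : ℕ →₀ ℝ) :
    restr E (c • x) = c • restr E x := by
  ext s
  simp only [restr_apply, Finsupp.smul_apply, smul_eq_mul]
  by_cases h : s ∈ E <;> simp [h]

lemma l1_restr (E : Finset ℕ) (x : ℕ →₀ ℝ) :
    l1 (restr E x) = ∑ s ∈ x.support ∩ E, |x s| := by
  have hs : (restr E x).support = x.support ∩ E := by
    ext s
    simp [restr, Finsupp.support_filter, Finset.mem_filter, Finset.mem_inter]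
  rw [l1, hs]
  apply Finset.sum_congr rfl
  intro s hs'
  rw [restr_apply, if_pos (Finset.mem_inter.mp hs').2]

lemma ordered_disjoint {n : ℕ} {Fs : Fin n → Finset ℕ}
    (h : ∀ i j : Fin n, i < j → ∀ a ∈ Fs i, ∀ b ∈ Fs j, a < b) :
    ∀ i j : Fin n, i ≠ j → Disjoint (Fs i) (Fs j) := by
  intro i j hij
  rcases lt_or_gt_of_ne hij with hlt | hgt
  · rw [Finset.disjoint_left]
    intro a ha ha'
    exact lt_irrefl a (h i j hlt a ha a ha')
  · rw [Finset.disjoint_left]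
    intro a ha ha'
    exact lt_irrefl a (h j i hgt a ha' a ha)

lemma sum_l1_restr_le {n : ℕ} {Es : Fin n → Finset ℕ} (x : ℕ →₀ ℝ)
    (h : ∀ i j : Fin n, i < j → ∀ a ∈ Es i, ∀ b ∈ Es j, a < b) :
    ∑ i, l1 (restr (Es i) x) ≤ l1 x := by
  have : ∑ i, l1 (restr (Es i) x) = ∑ s ∈ Finset.univ.biUnion (fun i => x.support ∩ Es i), |x s| := by
    rw [Finset.sum_biUnion]
    · simp [l1_restr]
    · intro i _ j _ hij
      exact Finset.disjoint_of_subset_left Finset.inter_subset_right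
        (Finset.disjoint_of_subset_right Finset.inter_subset_right (ordered_disjoint h i j hij))
  rw [this]
  apply Finset.sum_le_sum_of_subset_of_nonneg
  · intro s hs
    rcases Finset.mem_biUnion.mp hs with ⟨i, _, hmem⟩
    exact (Finset.mem_inter.mp hmem).1
  · intro s _ _
    exact abs_nonneg _

lemma tsir_le_l1 : ∀ (j : ℕ) (x : ℕ →₀ ℝ), tsir j x ≤ l1 x := by
  intro j
  induction j with
  | zero => intro x; exact ciSup_le (abs_le_l1 x)
  | succ j ih =>
    intro x
    rw [tsir]
    apply max_le (ih x)
    apply Real.sSup_le _ (l1_nonneg x)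
    rintro r ⟨m, Es, hadm, rfl⟩
    have h1 : ∑ i, tsir j (restr (Es i) x) ≤ ∑ i, l1 (restr (Es i) x) :=
      Finset.sum_le_sum fun i _ => ih _
    have h2 := sum_l1_restr_le x hadm.2.2.2
    nlinarith [l1_nonneg x]

lemma bdd_fam (j : ℕ) (x : ℕ →₀ ℝ) :
    BddAbove { r : ℝ | ∃ n : ℕ, ∃ Es : Fin n → Finset ℕ, Admissible n Es ∧
        r = (1 / 2) * ∑ i, tsir j (restr (Es i) x) } := by
  refine ⟨l1 x, ?_⟩
  rintro r ⟨m, Es, hadm, rfl⟩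
  have h1 : ∑ i, tsir j (restr (Es i) x) ≤ ∑ i, l1 (restr (Es i) x) :=
    Finset.sum_le_sum fun i _ => tsir_le_l1 _ _
  have h2 := sum_l1_restr_le x hadm.2.2.2
  nlinarith [l1_nonneg x]

lemma tsir_le_succ (j : ℕ) (x : ℕ →₀ ℝ) : tsir j x ≤ tsir (j + 1) x := by
  rw [tsir]; exact le_max_left _ _

lemma tsir_mono {j j' : ℕ} (h : j ≤ j') (x : ℕ →₀ ℝ) : tsir j x ≤ tsir j' x := by
  induction j' with
  | zero => simp_all
  | succ j' ih =>
    rcases Nat.lt_or_ge j (j'+1) with h' | h'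
    · exact le_trans (ih (Nat.lt_succ_iff.mp h')) (tsir_le_succ j' x)
    · have : j = j' + 1 := le_antisymm h h'
      subst this; rfl

lemma tsir_nonneg (j : ℕ) (x : ℕ →₀ ℝ) : 0 ≤ tsir j x :=
  le_trans (le_trans (abs_nonneg (x 0)) (abs_le_tsir0 x 0)) (tsir_mono (Nat.zero_le j) x)

lemma tsir_succ_ge_fam {j n : ℕ} {Es : Fin n → Finset ℕ} (x : ℕ →₀ ℝ)
    (hadm : Admissible n Es) :
    (1 / 2) * ∑ i, tsir j (restr (Es i) x) ≤ tsir (j + 1) x := by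
  rw [tsir]
  apply le_trans _ (le_max_right _ _)
  exact le_csSup (bdd_fam j x) ⟨n, Es, hadm, rfl⟩

def Sk : ℕ → Finset ℕ → Prop
  | 0 => fun F => F.card ≤ 1
  | (j+1) => fun F => Sk j F ∨ ∃ n : ℕ, ∃ Fs : Fin n → Finset ℕ,
      (∀ i, Sk j (Fs i)) ∧
      (∀ i1 i2 : Fin n, i1 < i2 → ∀ a ∈ Fs i1, ∀ b ∈ Fs i2, a < b) ∧
      (∀ a ∈ F, n ≤ a) ∧ F = Finset.univ.biUnion Fs

lemma Sk_empty (j : ℕ) : Sk j ∅ := by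
  induction j with
  | zero => simp [Sk]
  | succ j ih => exact Or.inl ih

lemma Sk_singleton (j : ℕ) (s : ℕ) : Sk j {s} := by
  induction j with
  | zero => simp [Sk]
  | succ j ih => exact Or.inl ih

noncomputable instance SkDec (j : ℕ) : DecidablePred (Sk j) := fun _ => Classical.propDecidable _

noncomputable def SkFam (x : ℕ →₀ ℝ) (j : ℕ) (E : Finset ℕ) : Finset (Finset ℕ) :=
  ((x.support ∩ E).powerset).filter (fun F => Sk j F)

lemma empty_mem_SkFam (x : ℕ →₀ ℝ) (j : ℕ) (E : Finset ℕ) : ∅ ∈ SkFam x j E := by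
  rw [SkFam, Finset.mem_filter]
  exact ⟨Finset.mem_powerset.mpr (Finset.empty_subset _), Sk_empty j⟩

lemma SkFam_nonempty (x : ℕ →₀ ℝ) (j : ℕ) (E : Finset ℕ) : (SkFam x j E).Nonempty :=
  ⟨∅, empty_mem_SkFam x j E⟩

noncomputable def bSup (x : ℕ →₀ ℝ) (j : ℕ) (E : Finset ℕ) : ℝ :=
  (SkFam x j E).sup' (SkFam_nonempty x j E) (fun F => ∑ s ∈ F, x s)

lemma bSup_nonneg (x : ℕ →₀ ℝ) (j : ℕ) (E : Finset ℕ) : 0 ≤ bSup x j E := by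
  have := Finset.le_sup' (f := fun F => ∑ s ∈ F, x s) (empty_mem_SkFam x j E)
  simp only [Finset.sum_empty] at this
  exact this

lemma mem_SkFam_iff {x : ℕ →₀ ℝ} {j : ℕ} {E F : Finset ℕ} :
    F ∈ SkFam x j E ↔ (F ⊆ x.support ∩ E ∧ Sk j F) := by
  rw [SkFam, Finset.mem_filter, Finset.mem_powerset]

lemma le_bSup {x : ℕ →₀ ℝ} {j : ℕ} {E F : Finset ℕ}
    (h : F ∈ SkFam x j E) : ∑ s ∈ F, x s ≤ bSup x j E :=
  Finset.le_sup' (fun F => ∑ s ∈ F, x s) h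

lemma bSup_le {x : ℕ →₀ ℝ} {j : ℕ} {E : Finset ℕ} {B : ℝ}
    (h : ∀ F ∈ SkFam x j E, ∑ s ∈ F, x s ≤ B) : bSup x j E ≤ B :=
  Finset.sup'_le _ _ h

lemma bSup_le_succ (x : ℕ →₀ ℝ) (j : ℕ) (E : Finset ℕ) :
    bSup x j E ≤ bSup x (j+1) E := by
  apply bSup_le
  intro F hF
  rw [mem_SkFam_iff] at hF
  exact le_bSup (mem_SkFam_iff.mpr ⟨hF.1, Or.inl hF.2⟩)

lemma tsir_restr_le_bSup (x : ℕ →₀ ℝ) (hx : ∀ s, 0 ≤ x s) :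
    ∀ (j : ℕ) (E : Finset ℕ), tsir j (restr E x) ≤ bSup x j E := by
  intro j
  induction j with
  | zero =>
    intro E
    apply ciSup_le
    intro s
    rw [restr_apply]
    by_cases hE : s ∈ E
    · rw [if_pos hE, abs_of_nonneg (hx s)]
      by_cases hs : s ∈ x.support
      · have : ({s} : Finset ℕ) ∈ SkFam x 0 E :=
          mem_SkFam_iff.mpr ⟨by simp [Finset.singleton_subset_iff, hs, hE], Sk_singleton 0 s⟩
        simpa using le_bSup this
      · rw [Finsupp.notMem_support_iff.mp hs]
        exact bSup_nonneg x 0 E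
    · rw [if_neg hE]
      simpa using bSup_nonneg x 0 E
  | succ j ih =>
    intro E
    rw [tsir]
    apply max_le (le_trans (ih E) (bSup_le_succ x j E))
    apply Real.sSup_le _ (bSup_nonneg x (j+1) E)
    rintro r ⟨m, Es, hadm, rfl⟩
    have key : ∀ i : Fin m, ∃ F ∈ SkFam x j (Es i ∩ E),
        tsir j (restr (Es i) (restr E x)) ≤ ∑ s ∈ F, x s := by
      intro i
      obtain ⟨F, hFmem, hFeq⟩ := Finset.exists_mem_eq_sup' (SkFam_nonempty x j (Es i ∩ E))
        (fun F => ∑ s ∈ F, x s)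
      refine ⟨F, hFmem, ?_⟩
      rw [restr_restr]
      calc tsir j (restr (Es i ∩ E) x) ≤ bSup x j (Es i ∩ E) := ih _
        _ = ∑ s ∈ F, x s := hFeq
    choose F hFmem hFle using key
    have hFsub : ∀ i, F i ⊆ x.support ∩ (Es i ∩ E) := fun i => (mem_SkFam_iff.mp (hFmem i)).1
    have hFSk : ∀ i, Sk j (F i) := fun i => (mem_SkFam_iff.mp (hFmem i)).2
    have hFord : ∀ i1 i2 : Fin m, i1 < i2 → ∀ a ∈ F i1, ∀ b ∈ F i2, a < b := by
      intro i1 i2 h12 a ha b hb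
      have ha' := Finset.mem_inter.mp ((hFsub i1) ha)
      have hb' := Finset.mem_inter.mp ((hFsub i2) hb)
      exact hadm.2.2.2 i1 i2 h12 a (Finset.mem_inter.mp ha'.2).1
        b (Finset.mem_inter.mp hb'.2).1
    set G := Finset.univ.biUnion F with hG
    have hGmem : G ∈ SkFam x (j+1) E := by
      rw [mem_SkFam_iff]
      constructor
      · intro s hs
        rcases Finset.mem_biUnion.mp hs with ⟨i, _, hmem⟩
        have := hFsub i hmem
        rw [Finset.mem_inter] at this ⊢
        exact ⟨this.1, (Finset.mem_inter.mp this.2).2⟩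
      · right
        refine ⟨m, F, hFSk, hFord, ?_, rfl⟩
        intro a ha
        rcases Finset.mem_biUnion.mp ha with ⟨i, _, hmem⟩
        have ha' := Finset.mem_inter.mp ((hFsub i) hmem)
        exact hadm.2.2.1 i a (Finset.mem_inter.mp ha'.2).1
    have hsum : ∑ i, ∑ s ∈ F i, x s = ∑ s ∈ G, x s := by
      rw [hG, Finset.sum_biUnion]
      intro i _ i' _ hii'
      exact ordered_disjoint hFord i i' hii'
    have h1 : ∑ i, tsir j (restr (Es i) (restr E x)) ≤ ∑ s ∈ G, x s := by
      rw [← hsum]; exact Finset.sum_le_sum fun i _ => hFle i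
    have h2 : (0:ℝ) ≤ ∑ s ∈ G, x s := Finset.sum_nonneg fun s _ => hx s
    calc (1/2) * ∑ i, tsir j (restr (Es i) (restr E x)) ≤ (1/2) * ∑ s ∈ G, x s := by linarith
      _ ≤ ∑ s ∈ G, x s := by linarith
      _ ≤ bSup x (j+1) E := le_bSup hGmem


lemma l1_eq_sum_of_subset {x : ℕ →₀ ℝ} {S : Finset ℕ} (h : x.support ⊆ S) :
    l1 x = ∑ s ∈ S, |x s| :=
  Finset.sum_subset h (fun s _ hs => by simp [Finsupp.notMem_support_iff.mp hs])

lemma sum_le_l1 {y : ℕ →₀ ℝ} (hy : ∀ s, 0 ≤ y s) (F : Finset ℕ) :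
    ∑ s ∈ F, y s ≤ l1 y := by
  have h1 : ∑ s ∈ F, y s = ∑ s ∈ F ∩ y.support, y s := by
    apply (Finset.sum_subset Finset.inter_subset_left ?_).symm
    intro s _ hs
    have : s ∉ y.support := fun h => hs (Finset.mem_inter.mpr ⟨‹s ∈ F›, h⟩)
    exact Finsupp.notMem_support_iff.mp this
  rw [h1]
  calc ∑ s ∈ F ∩ y.support, y s ≤ ∑ s ∈ y.support, y s :=
        Finset.sum_le_sum_of_subset_of_nonneg Finset.inter_subset_right (fun s _ _ => hy s)
    _ ≤ l1 y := Finset.sum_le_sum fun s _ => le_abs_self _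

lemma support_nonempty_of_l1_one {y : ℕ →₀ ℝ} (h : l1 y = 1) : y.support.Nonempty := by
  by_contra hne
  rw [Finset.not_nonempty_iff_eq_empty] at hne
  rw [l1, hne] at h
  simp at h

lemma geom_half_le_two (N : ℕ) : ∑ i ∈ Finset.range N, ((2:ℝ)⁻¹)^i ≤ 2 := by
  have h := geom_sum_eq (by norm_num : ((2:ℝ)⁻¹) ≠ 1) N
  rw [h]
  have h2 : (0:ℝ) ≤ (2⁻¹)^N := by positivity
  have : ((2:ℝ)⁻¹ - 1) = -(2⁻¹) := by norm_num
  rw [this, div_neg, div_eq_mul_inv]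
  norm_num
  nlinarith

/-- The main construction. -/
lemma build : ∀ (j a m : ℕ), ∃ (b : ℕ) (x : ℕ →₀ ℝ),
    a ≤ b ∧ (∀ s, 0 ≤ x s) ∧ l1 x = 1 ∧
    (∀ s ∈ x.support, a ≤ s ∧ s < b) ∧
    (∀ c : ℝ, 0 ≤ c → c * (1/2)^(j+1) ≤ tsir (j+1) (c • x)) ∧
    (∀ F : Finset ℕ, Sk j F → ∑ s ∈ F, x s ≤ ((m:ℝ)+1)⁻¹) := by
  intro j
  induction j with
  | zero =>
    intro a m
    set A := max a (m+1) with hA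
    set x : ℕ →₀ ℝ := ((m:ℝ)+1)⁻¹ • ∑ l ∈ Finset.range (m+1), Finsupp.single (A+l) 1 with hx
    have hinv : (0:ℝ) < ((m:ℝ)+1)⁻¹ := by positivity
    have hxapp : ∀ s, x s = if A ≤ s ∧ s < A + (m+1) then ((m:ℝ)+1)⁻¹ else 0 := by
      intro s
      rw [hx, Finsupp.smul_apply, Finsupp.finset_sum_apply]
      by_cases h : A ≤ s ∧ s < A + (m+1)
      · rw [if_pos h]
        have hsum : ∑ l ∈ Finset.range (m+1), (Finsupp.single (A+l) (1:ℝ)) s = 1 := by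
          rw [Finset.sum_eq_single_of_mem (s - A)]
          · rw [Finsupp.single_apply, if_pos (by omega)]
          · rw [Finset.mem_range]; omega
          · intro l _ hl
            rw [Finsupp.single_apply, if_neg (by omega)]
        rw [hsum]; simp
      · rw [if_neg h]
        have hsum : ∑ l ∈ Finset.range (m+1), (Finsupp.single (A+l) (1:ℝ)) s = 0 := by
          apply Finset.sum_eq_zero
          intro l hl
          rw [Finset.mem_range] at hl
          rw [Finsupp.single_apply, if_neg (by omega)]
        rw [hsum]; simp
    have hxpos : ∀ s, 0 ≤ x s := by
      intro s; rw [hxapp]; split <;> positivity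
    have hsupp : ∀ s ∈ x.support, A ≤ s ∧ s < A + (m+1) := by
      intro s hs
      by_contra h
      exact (Finsupp.mem_support_iff.mp hs) (by rw [hxapp, if_neg h])
    refine ⟨A + (m+1), x, by omega, hxpos, ?_, fun s hs => ⟨le_trans (le_max_left a _) (hsupp s hs).1, (hsupp s hs).2⟩, ?_, ?_⟩
    · -- l1 x = 1
      have hsub : x.support ⊆ Finset.Ico A (A + (m+1)) := by
        intro s hs
        rw [Finset.mem_Ico]; exact hsupp s hs
      rw [l1_eq_sum_of_subset hsub]
      have : ∀ s ∈ Finset.Ico A (A + (m+1)), |x s| = ((m:ℝ)+1)⁻¹ := by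
        intro s hs
        rw [Finset.mem_Ico] at hs
        rw [hxapp, if_pos hs, abs_of_pos hinv]
      rw [Finset.sum_congr rfl this, Finset.sum_const, Nat.card_Ico]
      have : (A + (m+1) - A) = m+1 := by omega
      rw [this, nsmul_eq_mul]
      push_cast
      field_simp
    · -- tsir 1 lower bound
      intro c hc
      have hadm : Admissible (m+1) (fun i : Fin (m+1) => {A + i.val}) := by
        refine ⟨Nat.succ_pos m, fun i => Finset.singleton_nonempty _, ?_, ?_⟩
        · intro i a' ha'
          rw [Finset.mem_singleton] at ha'
          omega
        · intro i1 i2 h12 a' ha' b' hb'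
          rw [Finset.mem_singleton] at ha' hb'
          have : i1.val < i2.val := h12
          omega
      have hlow := tsir_succ_ge_fam (j := 0) (c • x) hadm
      have hterm : ∀ i : Fin (m+1),
          c * ((m:ℝ)+1)⁻¹ ≤ tsir 0 (restr {A + i.val} (c • x)) := by
        intro i
        have h1 : restr {A + i.val} (c • x) (A + i.val) = c * ((m:ℝ)+1)⁻¹ := by
          rw [restr_apply, if_pos (Finset.mem_singleton_self _), Finsupp.smul_apply,
            smul_eq_mul, hxapp, if_pos (by constructor <;> omega)]
        calc c * ((m:ℝ)+1)⁻¹ = |restr {A + i.val} (c • x) (A + i.val)| := by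
              rw [h1, abs_of_nonneg (by positivity)]
          _ ≤ tsir 0 (restr {A + i.val} (c • x)) := abs_le_tsir0 _ _
      have hsum : c ≤ ∑ i : Fin (m+1), tsir 0 (restr {A + i.val} (c • x)) := by
        calc c = ∑ _i : Fin (m+1), c * ((m:ℝ)+1)⁻¹ := by
              rw [Finset.sum_const, Finset.card_univ, Fintype.card_fin, nsmul_eq_mul]
              push_cast; field_simp
          _ ≤ _ := Finset.sum_le_sum fun i _ => hterm i
      calc c * (1/2)^(0+1) = (1/2) * c := by ring
        _ ≤ (1/2) * ∑ i : Fin (m+1), tsir 0 (restr {A + i.val} (c • x)) := by linarith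
        _ ≤ tsir (0+1) (c • x) := hlow
    · -- Sk 0 bound
      intro F hF
      have hcard : F.card ≤ 1 := hF
      rcases F.eq_empty_or_nonempty with rfl | ⟨s, hs⟩
      · simp; positivity
      · have hFs : F = {s} := by
          apply Finset.eq_singleton_iff_unique_mem.mpr
          exact ⟨hs, fun b hb => Finset.card_le_one.mp hcard b hb s hs⟩
        rw [hFs, Finset.sum_singleton, hxapp]
        split
        · exact le_refl _
        · positivity
  | succ j ih =>
    intro a m
    choose bf xf hb hpos hl1 hsupp htsir hSk using ih
    set N := 4*(m+1) with hN
    obtain ⟨A, hA0, hAs⟩ : ∃ A : ℕ → ℕ, A 0 = max a N ∧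
        ∀ i, A (i+1) = bf (A i) (2^i * A i) :=
      ⟨fun i => Nat.rec (max a N) (fun i prev => bf prev (2^i * prev)) i, rfl, fun i => rfl⟩
    set u : ℕ → (ℕ →₀ ℝ) := fun i => xf (A i) (2^i * A i) with hu
    have hstep : ∀ i, A i ≤ A (i+1) := by
      intro i; rw [hAs]; exact hb _ _
    have hAmono : ∀ i i', i ≤ i' → A i ≤ A i' := by
      intro i i' h
      induction i' with
      | zero =>
        have : i = 0 := by omega
        subst this; exact le_refl _
      | succ i' ih' =>
        rcases Nat.lt_or_ge i (i'+1) with h' | h'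
        · exact le_trans (ih' (by omega)) (hstep i')
        · have : i = i' + 1 := by omega
          subst this; exact le_refl _
    have hA0N : N ≤ A 0 := by rw [hA0]; exact le_max_right _ _
    have hA0a : a ≤ A 0 := by rw [hA0]; exact le_max_left _ _
    have hA1 : ∀ i, 1 ≤ A i := fun i => le_trans (by omega) (le_trans hA0N (hAmono 0 i (by omega)))
    have hublock : ∀ i, ∀ s ∈ (u i).support, A i ≤ s ∧ s < A (i+1) := by
      intro i s hs
      have := hsupp (A i) (2^i * A i) s hs
      rw [← hAs] at this
      exact this
    -- disjointness of block supports
    have hdisj : ∀ i i', i < i' → ∀ s ∈ (u i).support, ∀ s' ∈ (u i').support, s < s' := by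
      intro i i' h s hs s' hs'
      have h1 := (hublock i s hs).2
      have h2 := (hublock i' s' hs').1
      have h3 := hAmono (i+1) i' h
      omega
    set x : ℕ →₀ ℝ := ((N:ℝ))⁻¹ • ∑ i ∈ Finset.range N, u i with hx
    have hNpos : (0:ℝ) < N := by positivity
    have hxval : ∀ s, x s = (N:ℝ)⁻¹ * ∑ i ∈ Finset.range N, u i s := by
      intro s
      rw [hx, Finsupp.smul_apply, Finsupp.finset_sum_apply, smul_eq_mul]
    have hxapp : ∀ i, i < N → ∀ s ∈ (u i).support, x s = (N:ℝ)⁻¹ * u i s := by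
      intro i hiN s hs
      rw [hxval]
      congr 1
      apply Finset.sum_eq_single_of_mem i (Finset.mem_range.mpr hiN)
      intro l _ hli
      by_contra hne
      have hls : s ∈ (u l).support := Finsupp.mem_support_iff.mpr hne
      rcases Nat.lt_or_ge l i with h' | h'
      · exact absurd (hdisj l i h' s hls s hs) (lt_irrefl s)
      · have : i < l := by omega
        exact absurd (hdisj i l this s hs s hls) (lt_irrefl s)
    have hxzero : ∀ s, (∀ i, i < N → s ∉ (u i).support) → x s = 0 := by
      intro s h
      rw [hxval]
      have : ∑ i ∈ Finset.range N, u i s = 0 := by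
        apply Finset.sum_eq_zero
        intro i hi
        exact Finsupp.notMem_support_iff.mp (h i (Finset.mem_range.mp hi))
      rw [this, mul_zero]
    have hxpos : ∀ s, 0 ≤ x s := by
      intro s
      rw [hxval]
      apply mul_nonneg (by positivity)
      exact Finset.sum_nonneg fun i _ => hpos _ _ s
    have hxsupp : ∀ s ∈ x.support, ∃ i, i < N ∧ s ∈ (u i).support := by
      intro s hs
      by_contra h
      push_neg at h
      exact (Finsupp.mem_support_iff.mp hs) (hxzero s fun i hi => h i hi)
    refine ⟨A N, x, le_trans hA0a (hAmono 0 N (by omega)), hxpos, ?_, ?_, ?_, ?_⟩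
    · -- l1 x = 1
      have hsub : x.support ⊆ (Finset.range N).biUnion (fun i => (u i).support) := by
        intro s hs
        obtain ⟨i, hiN, hmem⟩ := hxsupp s hs
        exact Finset.mem_biUnion.mpr ⟨i, Finset.mem_range.mpr hiN, hmem⟩
      rw [l1_eq_sum_of_subset hsub, Finset.sum_biUnion]
      · have : ∀ i ∈ Finset.range N, ∑ s ∈ (u i).support, |x s| = (N:ℝ)⁻¹ := by
          intro i hi
          have : ∀ s ∈ (u i).support, |x s| = (N:ℝ)⁻¹ * |u i s| := by
            intro s hs
            rw [hxapp i (Finset.mem_range.mp hi) s hs, abs_mul, abs_of_nonneg (by positivity)]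
          rw [Finset.sum_congr rfl this, ← Finset.mul_sum]
          have : ∑ s ∈ (u i).support, |u i s| = 1 := hl1 _ _
          rw [this, mul_one]
        rw [Finset.sum_congr rfl this, Finset.sum_const, Finset.card_range, nsmul_eq_mul]
        field_simp
      · intro i hi i' hi' hne
        rw [Function.onFun, Finset.disjoint_left]
        intro s hs hs'
        rcases Nat.lt_or_ge i i' with h' | h'
        · exact absurd (hdisj i i' h' s hs s hs') (lt_irrefl s)
        · have : i' < i := by omega
          exact absurd (hdisj i' i this s hs' s hs) (lt_irrefl s)
    · -- support bounds
      intro s hs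
      obtain ⟨i, hiN, hmem⟩ := hxsupp s hs
      have h1 := hublock i s hmem
      constructor
      · exact le_trans hA0a (le_trans (hAmono 0 i (by omega)) h1.1)
      · exact lt_of_lt_of_le h1.2 (hAmono (i+1) N (by omega))
    · -- tsir lower bound
      intro c hc
      have husuppne : ∀ i, (u i).support.Nonempty := fun i => support_nonempty_of_l1_one (hl1 _ _)
      have hadm : Admissible N (fun i : Fin N => (u i.val).support) := by
        refine ⟨by omega, fun i => husuppne _, ?_, ?_⟩
        · intro i s hs
          exact le_trans hA0N (le_trans (hAmono 0 i.val (by omega)) (hublock i.val s hs).1)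
        · intro i1 i2 h12 a' ha' b' hb'
          exact hdisj i1.val i2.val h12 a' ha' b' hb'
      have hlow := tsir_succ_ge_fam (j := j+1) (c • x) hadm
      have hrestr : ∀ i : Fin N, restr (u i.val).support (c • x) = (c * (N:ℝ)⁻¹) • u i.val := by
        intro i
        ext s
        simp only [restr_apply, Finsupp.smul_apply, smul_eq_mul]
        by_cases h : s ∈ (u i.val).support
        · rw [if_pos h, hxapp i.val i.isLt s h]
          ring
        · rw [if_neg h, Finsupp.notMem_support_iff.mp h, mul_zero]
      have hterm : ∀ i : Fin N, (c * (N:ℝ)⁻¹) * (1/2)^(j+1) ≤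
          tsir (j+1) (restr (u i.val).support (c • x)) := by
        intro i
        rw [hrestr i]
        exact htsir _ _ _ (by positivity)
      have hsum : c * (1/2)^(j+1) ≤ ∑ i : Fin N, tsir (j+1) (restr (u i.val).support (c • x)) := by
        calc c * (1/2)^(j+1) = ∑ _i : Fin N, (c * (N:ℝ)⁻¹) * (1/2)^(j+1) := by
              rw [Finset.sum_const, Finset.card_univ, Fintype.card_fin, nsmul_eq_mul]
              field_simp
          _ ≤ _ := Finset.sum_le_sum fun i _ => hterm i
      calc c * (1/2)^(j+1+1) = (1/2) * (c * (1/2)^(j+1)) := by ring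
        _ ≤ (1/2) * ∑ i : Fin N, tsir (j+1) (restr (u i.val).support (c • x)) := by linarith
        _ ≤ tsir (j+1+1) (c • x) := hlow
    · -- Sk (j+1) bound
      intro F hF
      classical
      have hswap : ∑ s ∈ F, x s = (N:ℝ)⁻¹ * ∑ i ∈ Finset.range N, ∑ s ∈ F, u i s := by
        rw [Finset.sum_congr rfl (fun s _ => hxval s), ← Finset.mul_sum]
        rw [Finset.sum_comm]
      by_cases hP : ∃ i, i < N ∧ ∃ s ∈ F, s ∈ (u i).support
      · set i0 := Nat.find hP with hi0def
        obtain ⟨hi0N, s0, hs0F, hs0supp⟩ := Nat.find_spec hP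
        have hmin : ∀ i', i' < i0 → ¬(i' < N ∧ ∃ s ∈ F, s ∈ (u i').support) :=
          fun i' h => Nat.find_min hP h
        have hinv_le : ∀ i : ℕ, (((2^i * A i : ℕ):ℝ) + 1)⁻¹ ≤ ((2:ℝ)⁻¹)^i := by
          intro i
          have h1 : ((2:ℝ))^i ≤ ((2^i * A i : ℕ):ℝ) + 1 := by
            push_cast
            have hA1' : (1:ℝ) ≤ (A i : ℝ) := by exact_mod_cast hA1 i
            nlinarith [pow_pos (by norm_num : (0:ℝ) < 2) i]
          have h2 : (0:ℝ) < (2:ℝ)^i := by positivity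
          calc (((2^i * A i : ℕ):ℝ) + 1)⁻¹ ≤ ((2:ℝ)^i)⁻¹ := by
                apply inv_anti₀ h2 h1
            _ = ((2:ℝ)⁻¹)^i := by rw [inv_pow]
        have hT : ∀ i ∈ Finset.range N, (∑ s ∈ F, u i s) ≤
            (if i = i0 then 1 else ((2:ℝ)⁻¹)^i) := by
          intro i hi
          rw [Finset.mem_range] at hi
          by_cases hii0 : i = i0
          · rw [if_pos hii0]
            calc ∑ s ∈ F, u i s ≤ l1 (u i) := sum_le_l1 (fun s => hpos _ _ s) F
              _ = 1 := hl1 _ _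
          · rw [if_neg hii0]
            rcases Nat.lt_or_ge i i0 with hlt | hge
            · have h0 : ∑ s ∈ F, u i s = 0 := by
                apply Finset.sum_eq_zero
                intro s hsF
                by_contra hne
                exact (hmin i hlt) ⟨hi, s, hsF, Finsupp.mem_support_iff.mpr hne⟩
              rw [h0]; positivity
            · have hgt : i0 < i := by omega
              have hs0A : (s0:ℝ) < (A i : ℝ) := by
                have h1 := (hublock i0 s0 hs0supp).2
                have h2 := hAmono (i0+1) i hgt
                exact_mod_cast lt_of_lt_of_le h1 h2
              rcases hF with hFj | ⟨n, Fs, hSk', hord', hge', hFeq⟩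
              · calc ∑ s ∈ F, u i s ≤ (((2^i * A i : ℕ):ℝ) + 1)⁻¹ := hSk _ _ F hFj
                  _ ≤ ((2:ℝ)⁻¹)^i := hinv_le i
              · have hn : (n:ℝ) ≤ (A i : ℝ) := by
                  have := hge' s0 hs0F
                  have : (n:ℝ) ≤ (s0:ℝ) := by exact_mod_cast this
                  linarith
                have hsplit : ∑ s ∈ F, u i s = ∑ l : Fin n, ∑ s ∈ Fs l, u i s := by
                  rw [hFeq, Finset.sum_biUnion]
                  intro l _ l' _ hll'
                  exact ordered_disjoint hord' l l' hll'
                have hbound : ∑ l : Fin n, ∑ s ∈ Fs l, u i s ≤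
                    (n:ℝ) * (((2^i * A i : ℕ):ℝ) + 1)⁻¹ := by
                  calc ∑ l : Fin n, ∑ s ∈ Fs l, u i s
                      ≤ ∑ _l : Fin n, (((2^i * A i : ℕ):ℝ) + 1)⁻¹ :=
                        Finset.sum_le_sum fun l _ => hSk _ _ _ (hSk' l)
                    _ = (n:ℝ) * (((2^i * A i : ℕ):ℝ) + 1)⁻¹ := by
                        rw [Finset.sum_const, Finset.card_univ, Fintype.card_fin, nsmul_eq_mul]
                have hfin : (A i : ℝ) * (((2^i * A i : ℕ):ℝ) + 1)⁻¹ ≤ ((2:ℝ)⁻¹)^i := by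
                  have hpos2 : (0:ℝ) < ((2^i * A i : ℕ):ℝ) + 1 := by positivity
                  have h2i : (0:ℝ) < (2:ℝ)^i := by positivity
                  rw [inv_eq_one_div, mul_comm, div_mul_eq_mul_div, one_mul,
                    div_le_iff₀ hpos2]
                  push_cast
                  have hA1' : (1:ℝ) ≤ (A i : ℝ) := by exact_mod_cast hA1 i
                  have : ((2:ℝ)⁻¹)^i * (2:ℝ)^i = 1 := by
                    rw [← mul_pow]; norm_num
                  nlinarith [pow_nonneg (by norm_num : (0:ℝ) ≤ 2⁻¹) i]
                calc ∑ s ∈ F, u i s = ∑ l : Fin n, ∑ s ∈ Fs l, u i s := hsplit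
                  _ ≤ (n:ℝ) * (((2^i * A i : ℕ):ℝ) + 1)⁻¹ := hbound
                  _ ≤ (A i : ℝ) * (((2^i * A i : ℕ):ℝ) + 1)⁻¹ := by
                      apply mul_le_mul_of_nonneg_right hn
                      positivity
                  _ ≤ ((2:ℝ)⁻¹)^i := hfin
        have hsumT : ∑ i ∈ Finset.range N, ∑ s ∈ F, u i s ≤ 3 := by
          calc ∑ i ∈ Finset.range N, ∑ s ∈ F, u i s
              ≤ ∑ i ∈ Finset.range N, (if i = i0 then 1 else ((2:ℝ)⁻¹)^i) :=
                Finset.sum_le_sum hT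
            _ ≤ ∑ i ∈ Finset.range N, (((2:ℝ)⁻¹)^i + (if i = i0 then 1 else 0)) := by
                apply Finset.sum_le_sum
                intro i _
                split
                · have : (0:ℝ) ≤ ((2:ℝ)⁻¹)^i := by positivity
                  linarith
                · simp
            _ = (∑ i ∈ Finset.range N, ((2:ℝ)⁻¹)^i) +
                (∑ i ∈ Finset.range N, (if i = i0 then (1:ℝ) else 0)) := by
                rw [Finset.sum_add_distrib]
            _ ≤ 2 + 1 := by
                have h1 := geom_half_le_two N
                have h2 : (∑ i ∈ Finset.range N, (if i = i0 then (1:ℝ) else 0)) = 1 := by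
                  rw [Finset.sum_ite_eq' (Finset.range N) i0 (fun _ => (1:ℝ))]
                  rw [if_pos (Finset.mem_range.mpr hi0N)]
                linarith
            _ = 3 := by norm_num
        rw [hswap]
        have hmul : (N:ℝ)⁻¹ * ∑ i ∈ Finset.range N, ∑ s ∈ F, u i s ≤ (N:ℝ)⁻¹ * 3 := by
          apply mul_le_mul_of_nonneg_left hsumT (by positivity)
        apply le_trans hmul
        rw [hN]
        have hm : (0:ℝ) < (m:ℝ) + 1 := by positivity
        have hcast : ((4*(m+1) : ℕ):ℝ) = 4 * ((m:ℝ)+1) := by push_cast; ring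
        rw [hcast, mul_inv, inv_eq_one_div ((m:ℝ)+1)]
        rw [div_eq_mul_one_div, ← inv_eq_one_div]
        have : (0:ℝ) < ((m:ℝ)+1)⁻¹ := by positivity
        nlinarith
      · push_neg at hP
        have : ∀ i ∈ Finset.range N, ∑ s ∈ F, u i s = 0 := by
          intro i hi
          apply Finset.sum_eq_zero
          intro s hsF
          exact Finsupp.notMem_support_iff.mp (hP i (Finset.mem_range.mp hi) s hsF)
        rw [hswap, Finset.sum_congr rfl this]
        simp
        positivity


lemma tsir_le_of_Sk {x : ℕ →₀ ℝ} (hx : ∀ s, 0 ≤ x s) (j : ℕ) (B : ℝ) (hB : 0 ≤ B)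
    (h : ∀ F : Finset ℕ, Sk j F → ∑ s ∈ F, x s ≤ B) : tsir j x ≤ B := by
  have h1 : tsir j x = tsir j (restr x.support x) := by rw [restr_support]
  rw [h1]
  refine le_trans (tsir_restr_le_bSup x hx j x.support) (bSup_le ?_)
  intro F hF
  exact h F (mem_SkFam_iff.mp hF).2

/-- `D_{n,k} ≤ 1` whenever `n ≤ k`, and `D_{n,k} ≥ k` whenever `n > k`. -/
theorem Dnk_le_one_and_ge (n k : ℕ) :
    (n ≤ k → Dnk n k ≤ 1) ∧ (k < n → (k : ℝ≥0∞) ≤ Dnk n k) := by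
  constructor
  · intro hnk
    apply iSup_le
    rintro ⟨x, hx⟩
    rw [ENNReal.ofReal_le_one]
    rcases eq_or_lt_of_le (tsir_nonneg k x) with h0 | h0
    · rw [← h0, div_zero]; norm_num
    · exact div_le_one_of_le₀ (tsir_mono hnk x) (le_of_lt h0)
  · intro hkn
    rcases Nat.eq_zero_or_pos k with rfl | hk
    · simp
    · set M := 2^(k+1) * k with hM
      obtain ⟨b, x, hab, hxpos, hxl1, hxsupp, hxtsir, hxSk⟩ := build k 1 M
      have h1 : ((1:ℝ)/2)^(k+1) ≤ tsir (k+1) x := by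
        have := hxtsir 1 (by norm_num)
        rwa [one_mul, one_smul] at this
      have hBnn : (0:ℝ) ≤ ((M:ℝ)+1)⁻¹ := by positivity
      have h2 : tsir k x ≤ ((M:ℝ)+1)⁻¹ := tsir_le_of_Sk hxpos k _ hBnn hxSk
      have h3 : 0 < tsir k x := by
        obtain ⟨s0, hs0⟩ := support_nonempty_of_l1_one hxl1
        have : 0 < |x s0| := abs_pos.mpr (Finsupp.mem_support_iff.mp hs0)
        calc (0:ℝ) < |x s0| := this
          _ ≤ tsir 0 x := abs_le_tsir0 x s0
          _ ≤ tsir k x := tsir_mono (Nat.zero_le k) x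
      have h4 : (k:ℝ) * tsir k x ≤ tsir n x := by
        have hcast : ((M:ℕ):ℝ) = 2^(k+1) * (k:ℝ) := by rw [hM]; push_cast; ring
        have hstep1 : (k:ℝ) * tsir k x ≤ (k:ℝ) * ((M:ℝ)+1)⁻¹ :=
          mul_le_mul_of_nonneg_left h2 (by positivity)
        have hstep2 : (k:ℝ) * ((M:ℝ)+1)⁻¹ ≤ ((1:ℝ)/2)^(k+1) := by
          rw [hcast]
          have hpos : (0:ℝ) < 2^(k+1) * (k:ℝ) + 1 := by positivity
          have hhalf : ((1:ℝ)/2)^(k+1) * (2:ℝ)^(k+1) = 1 := by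
            rw [← mul_pow]; norm_num
          have h2p : (0:ℝ) < (2:ℝ)^(k+1) := by positivity
          have hkr : (0:ℝ) ≤ (k:ℝ) := Nat.cast_nonneg k
          have hiff : (k:ℝ) * (2^(k+1) * (k:ℝ) + 1)⁻¹ ≤ ((1:ℝ)/2)^(k+1) ↔
              (k:ℝ) ≤ ((1:ℝ)/2)^(k+1) * (2^(k+1) * (k:ℝ) + 1) := by
            rw [← div_eq_mul_inv, div_le_iff₀ hpos]
          rw [hiff]
          nlinarith [pow_nonneg (by norm_num : (0:ℝ) ≤ 1/2) (k+1)]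
        calc (k:ℝ) * tsir k x ≤ ((1:ℝ)/2)^(k+1) := le_trans hstep1 hstep2
          _ ≤ tsir (k+1) x := h1
          _ ≤ tsir n x := tsir_mono hkn x
      have h5 : (k:ℝ) ≤ tsir n x / tsir k x := (le_div_iff₀ h3).mpr h4
      calc (k : ℝ≥0∞) = ENNReal.ofReal (k:ℝ) := (ENNReal.ofReal_natCast k).symm
        _ ≤ ENNReal.ofReal (tsir n x / tsir k x) := ENNReal.ofReal_le_ofReal h5
        _ ≤ Dnk n k := le_iSup_of_le ⟨x, hxl1⟩ (le_refl _)
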